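/- arXiv:2112.01585 — 4 statements merged into one kernel-verified Lean document; each statement's English description precedes it below -/
import Mathlib

section
/- Suppose A, B ∈ ℝ^{d×d} are positive definite matrices with A ⪰ B. Then for any vector x ∈ ℝ^d, ‖x‖_A ≤ ‖x‖_B · √(det(A)/det(B)), where ‖x‖_M := √(xᵀ M x). -/
open Matrix Finset

private lemma dp_conj {d : ℕ} (M N : Matrix (Fin d) (Fin d) ℝ) (x z : Fin d → ℝ) :
    (M *ᵥ x) ⬝ᵥ (N *ᵥ z) = x ⬝ᵥ ((Mᵀ * N) *ᵥ z) := by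
  symm
  rw [← mulVec_mulVec, dotProduct_mulVec x, vecMul_transpose]

open scoped MatrixOrder in
private lemma key_ineq {d : ℕ} (A B : Matrix (Fin d) (Fin d) ℝ)
    (hA : A.PosDef) (hB : B.PosDef) (hAB : (A - B).PosSemidef) (x : Fin d → ℝ) :
    x ⬝ᵥ A.mulVec x ≤ (A.det / B.det) * (x ⬝ᵥ B.mulVec x) := by
  classical
  set S := CFC.sqrt B with hSdef
  have hSsemi : S.PosSemidef := nonneg_iff_posSemidef.mp (CFC.sqrt_nonneg B)
  have hSS : S * S = B := CFC.sqrt_mul_sqrt_self B hB.posSemidef.nonneg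
  have hSt : Sᵀ = S := by
    have h := hSsemi.1
    rwa [IsHermitian, conjTranspose_eq_transpose_of_trivial] at h
  have hdetB : 0 < B.det := hB.det_pos
  have hdetS2 : S.det * S.det = B.det := by rw [← det_mul, hSS]
  have hdetS : S.det ≠ 0 := by
    intro h; rw [h, mul_zero] at hdetS2; exact hdetB.ne hdetS2
  have hSunit : IsUnit S.det := isUnit_iff_ne_zero.mpr hdetS
  set T := S⁻¹ with hTdef
  have hTS : T * S = 1 := nonsing_inv_mul S hSunit
  have hST : S * T = 1 := mul_nonsing_inv S hSunit
  have hTt : Tᵀ = T := by rw [hTdef, transpose_nonsing_inv, hSt]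
  have hTh : Tᴴ = T := by rw [conjTranspose_eq_transpose_of_trivial, hTt]
  have hSh : Sᴴ = S := by rw [conjTranspose_eq_transpose_of_trivial, hSt]
  set C := T * A * T with hCdef
  have hCsemi : C.PosSemidef := by
    have := hA.posSemidef.conjTranspose_mul_mul_same T
    rwa [hTh] at this
  have hTBT : T * B * T = 1 := by
    rw [← hSS, show T * (S * S) * T = (T * S) * (S * T) by noncomm_ring, hTS, hST, one_mul]
  have hC1 : (C - 1).PosSemidef := by
    have h2 := hAB.conjTranspose_mul_mul_same T
    rw [hTh] at h2
    have : T * (A - B) * T = C - 1 := by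
      rw [hCdef, ← hTBT]
      noncomm_ring
    rwa [this] at h2
  have hCherm : C.IsHermitian := hCsemi.1
  set μ := hCherm.eigenvalues with hμdef
  -- each eigenvalue is ≥ 1
  have hμ1 : ∀ i, 1 ≤ μ i := by
    intro i
    have hv := hCherm.mulVec_eigenvectorBasis i
    set v : Fin d → ℝ := ⇑(hCherm.eigenvectorBasis i) with hvdef
    have hvv : v ⬝ᵥ v = 1 := by
      have h2 : (inner ℝ (hCherm.eigenvectorBasis i) (hCherm.eigenvectorBasis i) : ℝ) = 1 := by
        rw [real_inner_self_eq_norm_sq, hCherm.eigenvectorBasis.orthonormal.1 i]; norm_num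
      rw [EuclideanSpace.inner_eq_star_dotProduct] at h2
      simpa [v] using h2
    have h0 := hC1.dotProduct_mulVec_nonneg v
    rw [sub_mulVec, one_mulVec, hv] at h0
    simp only [star_trivial, dotProduct_sub, dotProduct_smul, smul_eq_mul, hvv, mul_one] at h0
    linarith
  set U : Matrix (Fin d) (Fin d) ℝ := (hCherm.eigenvectorUnitary : Matrix (Fin d) (Fin d) ℝ) with hUdef
  have hUU : U * Uᵀ = 1 := by
    have := (mem_unitaryGroup_iff.mp hCherm.eigenvectorUnitary.2)
    rwa [star_eq_conjTranspose, conjTranspose_eq_transpose_of_trivial] at this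
  have hspec : C = U * diagonal μ * Uᵀ := by
    have := hCherm.spectral_theorem
    rwa [Unitary.conjStarAlgAut_apply, star_eq_conjTranspose, conjTranspose_eq_transpose_of_trivial,
      show (RCLike.ofReal ∘ hCherm.eigenvalues : Fin d → ℝ) = μ from rfl] at this
  obtain ⟨y, hydef⟩ : ∃ y, y = S *ᵥ x := ⟨_, rfl⟩
  obtain ⟨w, hwdef⟩ : ∃ w, w = Uᵀ *ᵥ y := ⟨_, rfl⟩
  -- x ⬝ A x = y ⬝ C y
  have hSCS : S * (C * S) = A := by
    rw [hCdef, show S * (T * A * T * S) = (S * T) * A * (T * S) by noncomm_ring,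
      hST, hTS, one_mul, mul_one]
  have hxA : x ⬝ᵥ A *ᵥ x = y ⬝ᵥ C *ᵥ y := by
    conv_rhs => rw [hydef, mulVec_mulVec, dp_conj, hSt, hSCS]
  -- x ⬝ B x = y ⬝ y
  have hxB : x ⬝ᵥ B *ᵥ x = y ⬝ᵥ y := by
    conv_rhs => rw [hydef, dp_conj, hSt, hSS]
  -- y ⬝ C y = w ⬝ diagonal μ w
  have hyC : y ⬝ᵥ C *ᵥ y = w ⬝ᵥ (diagonal μ) *ᵥ w := by
    conv_rhs => rw [hwdef, mulVec_mulVec, dp_conj, transpose_transpose, ← Matrix.mul_assoc,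
      ← hspec]
  -- y ⬝ y = w ⬝ w
  have hyy : y ⬝ᵥ y = w ⬝ᵥ w := by
    conv_rhs => rw [hwdef, dp_conj, transpose_transpose, hUU, one_mulVec]
  -- det C = det A / det B
  have hdetC : C.det = A.det / B.det := by
    rw [hCdef, det_mul, det_mul, hTdef, det_nonsing_inv, Ring.inverse_eq_inv]
    field_simp [← hdetS2]
    rw [← hdetS2]; ring
  have hprod : ∏ i, μ i = A.det / B.det := by
    have := hCherm.det_eq_prod_eigenvalues
    rw [← hdetC, this]
    norm_num
    rfl
  -- the diagonal quadratic form bound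
  have hbound : w ⬝ᵥ (diagonal μ) *ᵥ w ≤ (∏ i, μ i) * (w ⬝ᵥ w) := by
    have hexp : w ⬝ᵥ (diagonal μ) *ᵥ w = ∑ i, μ i * (w i)^2 := by
      simp [dotProduct, mulVec_diagonal]
      congr 1; funext i; ring
    have hww : w ⬝ᵥ w = ∑ i, (w i)^2 := by
      simp [dotProduct]; congr 1; funext i; ring
    rw [hexp, hww, Finset.mul_sum]
    apply Finset.sum_le_sum
    intro i _
    apply mul_le_mul_of_nonneg_right _ (sq_nonneg _)
    have herase : (1:ℝ) ≤ ∏ j ∈ Finset.univ.erase i, μ j := by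
      calc (1:ℝ) = ∏ j ∈ Finset.univ.erase i, 1 := by simp
        _ ≤ ∏ j ∈ Finset.univ.erase i, μ j :=
          Finset.prod_le_prod (fun j _ => zero_le_one) (fun j _ => hμ1 j)
    calc μ i = μ i * 1 := (mul_one _).symm
      _ ≤ μ i * ∏ j ∈ Finset.univ.erase i, μ j :=
          mul_le_mul_of_nonneg_left herase (le_trans zero_le_one (hμ1 i))
      _ = ∏ j, μ j := Finset.mul_prod_erase Finset.univ μ (Finset.mem_univ i)
  calc x ⬝ᵥ A *ᵥ x = w ⬝ᵥ (diagonal μ) *ᵥ w := by rw [hxA, hyC]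
    _ ≤ (∏ i, μ i) * (w ⬝ᵥ w) := hbound
    _ = (A.det / B.det) * (x ⬝ᵥ B *ᵥ x) := by rw [hprod, hxB, hyy]

/-- For positive definite A ⪰ B and any x, ‖x‖_A ≤ ‖x‖_B · √(det A / det B),
where ‖x‖_M = √(xᵀ M x). -/
theorem norm_le_norm_mul_sqrt_det_ratio {d : ℕ} (A B : Matrix (Fin d) (Fin d) ℝ)
    (hA : A.PosDef) (hB : B.PosDef) (hAB : (A - B).PosSemidef) (x : Fin d → ℝ) :
    Real.sqrt (x ⬝ᵥ A.mulVec x) ≤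
      Real.sqrt (x ⬝ᵥ B.mulVec x) * Real.sqrt (A.det / B.det) := by
  have hBx : 0 ≤ x ⬝ᵥ B.mulVec x := by
    have := hB.posSemidef.dotProduct_mulVec_nonneg x
    simpa using this
  rw [← Real.sqrt_mul hBx]
  apply Real.sqrt_le_sqrt
  rw [mul_comm]
  exact key_ineq A B hA hB hAB x
end

section
/- Let v ∈ ℝ^d have i.i.d. coordinates drawn from the standard Laplace distribution Lap(0,1). Then for any α > 0, P(‖v‖₂ > √d · log(d/α)) ≤ α. -/
open MeasureTheory Real Set ENNReal

noncomputable def laplaceMeasure : Measure ℝ :=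
  volume.withDensity fun t => ENNReal.ofReal ((1 / 2) * Real.exp (-|t|))

lemma lap_Iic (c : ℝ) :
    ∫⁻ t in Iic c, ENNReal.ofReal ((1 / 2) * Real.exp t)
      = ENNReal.ofReal ((1 / 2) * Real.exp c) := by
  rw [← ofReal_integral_eq_lintegral_ofReal]
  · rw [MeasureTheory.integral_const_mul, integral_exp_Iic]
  · exact (integrableOn_exp_Iic c).const_mul _
  · exact Filter.Eventually.of_forall fun t => by positivity

lemma lap_Ioi (c : ℝ) :
    ∫⁻ t in Ioi c, ENNReal.ofReal ((1 / 2) * Real.exp (-t))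
      = ENNReal.ofReal ((1 / 2) * Real.exp (-c)) := by
  rw [← ofReal_integral_eq_lintegral_ofReal]
  · rw [MeasureTheory.integral_const_mul, integral_exp_neg_Ioi]
  · have h := exp_neg_integrableOn_Ioi c one_pos
    simp only [neg_mul, one_mul] at h
    exact h.const_mul _
  · exact Filter.Eventually.of_forall fun t => by positivity

instance : IsProbabilityMeasure laplaceMeasure := by
  constructor
  rw [laplaceMeasure, withDensity_apply _ MeasurableSet.univ, Measure.restrict_univ,
    ← lintegral_add_compl (μ := volume)
      (fun t => ENNReal.ofReal ((1 / 2) * Real.exp (-|t|))) (measurableSet_Iic (a := (0:ℝ)))]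
  have h1 : ∫⁻ t in Iic (0:ℝ), ENNReal.ofReal ((1 / 2) * Real.exp (-|t|))
      = ENNReal.ofReal (1 / 2) := by
    rw [setLIntegral_congr_fun measurableSet_Iic
      (fun t (ht : t ∈ Iic (0:ℝ)) => show ENNReal.ofReal ((1 / 2) * Real.exp (-|t|)) = ENNReal.ofReal ((1 / 2) * Real.exp t) by
        rw [abs_of_nonpos ht, neg_neg]), lap_Iic]
    simp
  have h2 : ∫⁻ t in (Iic (0:ℝ))ᶜ, ENNReal.ofReal ((1 / 2) * Real.exp (-|t|))
      = ENNReal.ofReal (1 / 2) := by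
    rw [compl_Iic, setLIntegral_congr_fun measurableSet_Ioi
      (fun t (ht : t ∈ Ioi (0:ℝ)) => show ENNReal.ofReal ((1 / 2) * Real.exp (-|t|)) = ENNReal.ofReal ((1 / 2) * Real.exp (-t)) by
        rw [abs_of_pos ht]), lap_Ioi]
    simp
  rw [h1, h2, ← ENNReal.ofReal_add (by norm_num) (by norm_num)]
  norm_num

lemma lap_tail (L : ℝ) :
    laplaceMeasure {t : ℝ | L < |t|} ≤ ENNReal.ofReal (Real.exp (-L)) := by
  have hsub : {t : ℝ | L < |t|} ⊆ Iic (-L) ∪ Ioi L := by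
    intro t ht
    have ht' : L < |t| := ht
    rcases lt_abs.mp ht' with h | h
    · exact Or.inr h
    · exact Or.inl (mem_Iic.mpr (by linarith))
  have hIic : laplaceMeasure (Iic (-L)) ≤ ENNReal.ofReal ((1 / 2) * Real.exp (-L)) := by
    rw [laplaceMeasure, withDensity_apply _ measurableSet_Iic]
    calc ∫⁻ t in Iic (-L), ENNReal.ofReal ((1 / 2) * Real.exp (-|t|))
        ≤ ∫⁻ t in Iic (-L), ENNReal.ofReal ((1 / 2) * Real.exp t) := by
          refine lintegral_mono fun t => ENNReal.ofReal_le_ofReal ?_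
          gcongr
          exact neg_abs_le t
      _ = ENNReal.ofReal ((1 / 2) * Real.exp (-L)) := lap_Iic (-L)
  have hIoi : laplaceMeasure (Ioi L) ≤ ENNReal.ofReal ((1 / 2) * Real.exp (-L)) := by
    rw [laplaceMeasure, withDensity_apply _ measurableSet_Ioi]
    calc ∫⁻ t in Ioi L, ENNReal.ofReal ((1 / 2) * Real.exp (-|t|))
        ≤ ∫⁻ t in Ioi L, ENNReal.ofReal ((1 / 2) * Real.exp (-t)) := by
          refine lintegral_mono fun t => ENNReal.ofReal_le_ofReal ?_
          gcongr
          exact le_abs_self t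
      _ = ENNReal.ofReal ((1 / 2) * Real.exp (-L)) := lap_Ioi L
  calc laplaceMeasure {t : ℝ | L < |t|}
      ≤ laplaceMeasure (Iic (-L) ∪ Ioi L) := measure_mono hsub
    _ ≤ laplaceMeasure (Iic (-L)) + laplaceMeasure (Ioi L) := measure_union_le _ _
    _ ≤ ENNReal.ofReal ((1 / 2) * Real.exp (-L)) + ENNReal.ofReal ((1 / 2) * Real.exp (-L)) :=
        add_le_add hIic hIoi
    _ = ENNReal.ofReal (Real.exp (-L)) := by
        rw [← ENNReal.ofReal_add (by positivity) (by positivity)]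
        ring_nf

/-- For v ∈ ℝ^d with i.i.d. standard Laplace coordinates,
P(‖v‖₂ > √d · log(d/α)) ≤ α. -/
theorem laplace_vector_norm_tail_bound (d : ℕ) (α : ℝ) (hα : 0 < α) :
    (Measure.pi fun _ : Fin d => laplaceMeasure)
        {v | Real.sqrt (∑ i, (v i) ^ 2) > Real.sqrt d * Real.log (d / α)}
      ≤ ENNReal.ofReal α := by
  rcases Nat.eq_zero_or_pos d with hd | hd
  · subst hd
    have h0 : {v : Fin 0 → ℝ | Real.sqrt (∑ i, (v i) ^ 2)
        > Real.sqrt ((0:ℕ):ℝ) * Real.log (((0:ℕ):ℝ) / α)} = ∅ := by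
      ext v; simp
    rw [h0]
    simp
  · set L := Real.log (d / α) with hL
    have hdpos : (0 : ℝ) < d := by exact_mod_cast hd
    -- subset of union of coordinate tails
    have hsub : {v : Fin d → ℝ | Real.sqrt (∑ i, (v i) ^ 2) > Real.sqrt d * L}
        ⊆ ⋃ i : Fin d, Function.eval i ⁻¹' {t : ℝ | L < |t|} := by
      intro v hv
      by_contra hcon
      simp only [mem_iUnion, not_exists, Function.eval, mem_preimage, mem_setOf_eq,
        not_lt] at hcon
      have hLnn : 0 ≤ L := le_trans (abs_nonneg _) (hcon ⟨0, hd⟩)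
      have hsum : ∑ i, (v i) ^ 2 ≤ (d : ℝ) * L ^ 2 := by
        calc ∑ i, (v i) ^ 2 ≤ ∑ _i : Fin d, L ^ 2 := by
              refine Finset.sum_le_sum fun i _ => ?_
              have := hcon i
              nlinarith [abs_nonneg (v i), sq_abs (v i)]
          _ = (d : ℝ) * L ^ 2 := by simp [mul_comm]
      have : Real.sqrt (∑ i, (v i) ^ 2) ≤ Real.sqrt d * L := by
        calc Real.sqrt (∑ i, (v i) ^ 2) ≤ Real.sqrt ((d : ℝ) * L ^ 2) :=
            Real.sqrt_le_sqrt hsum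
          _ = Real.sqrt d * L := by
            rw [Real.sqrt_mul (le_of_lt hdpos), Real.sqrt_sq hLnn]
      exact absurd hv (not_lt.mpr this)
    -- each coordinate tail
    have hcoord : ∀ i : Fin d,
        (Measure.pi fun _ : Fin d => laplaceMeasure)
          (Function.eval i ⁻¹' {t : ℝ | L < |t|}) ≤ ENNReal.ofReal (α / d) := by
      intro i
      have hmeas : MeasurableSet {t : ℝ | L < |t|} :=
        measurableSet_lt measurable_const (measurable_id.abs)
      rw [Set.eval_preimage, Measure.pi_pi]
      rw [Finset.prod_eq_single i
        (fun j _ hj => by rw [Function.update_of_ne hj]; exact measure_univ)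
        (fun h => absurd (Finset.mem_univ i) h), Function.update_self]
      refine le_trans (lap_tail L) (le_of_eq ?_)
      congr 1
      rw [hL, Real.exp_neg, Real.exp_log (by positivity)]
      field_simp
    calc (Measure.pi fun _ : Fin d => laplaceMeasure)
          {v | Real.sqrt (∑ i, (v i) ^ 2) > Real.sqrt d * L}
        ≤ (Measure.pi fun _ : Fin d => laplaceMeasure)
            (⋃ i : Fin d, Function.eval i ⁻¹' {t : ℝ | L < |t|}) := measure_mono hsub
      _ ≤ ∑ i : Fin d, (Measure.pi fun _ : Fin d => laplaceMeasure)
            (Function.eval i ⁻¹' {t : ℝ | L < |t|}) := measure_iUnion_fintype_le _ _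
      _ ≤ ∑ i : Fin d, ENNReal.ofReal (α / d) :=
          Finset.sum_le_sum fun i _ => hcoord i
      _ = (d : ℝ≥0∞) * ENNReal.ofReal (α / d) := by
          simp [Finset.sum_const, nsmul_eq_mul]
      _ = ENNReal.ofReal α := by
          rw [← ENNReal.ofReal_natCast, ← ENNReal.ofReal_mul (by positivity)]
          congr 1
          field_simp
end

section
/- Let Λ₀ = μ·I_{d×d} with μ > 0 and Λ_K = μ·I + Σ_{i=1}^K φ_iφ_iᵀ with ‖φ_i‖₂ ≤ 1. Consider any increasing sequence of indices 0 = k₀ < k₁ < ⋯ < k_N = K and the set S = {b : log(det(Λ_{k_{b+1}})/det(Λ_{k_b})) > c} for a constant c > 0, where Λ_k = μ·I + Σ_{i=1}^k φ_iφ_iᵀ. Then |S| ≤ (d/c)·log(K/(dμ) + 1). -/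
open Matrix

lemma psd_vmv {d : ℕ} (v : Fin d → ℝ) : (vecMulVec v v).PosSemidef := by
  rw [posSemidef_iff_dotProduct_mulVec]
  constructor
  · ext i j
    simp [vecMulVec, conjTranspose_apply, mul_comm]
  · intro x
    have h : (vecMulVec v v) *ᵥ x = (v ⬝ᵥ x) • v := by
      ext j
      simp [vecMulVec, mulVec, dotProduct, Finset.mul_sum, mul_assoc, mul_comm, mul_left_comm]
    rw [h]
    simp only [dotProduct_smul, smul_eq_mul, star_trivial]
    rw [dotProduct_comm]
    exact mul_self_nonneg _

lemma posdef_smul_one {d : ℕ} {μ : ℝ} (hμ : 0 < μ) :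
    (μ • (1 : Matrix (Fin d) (Fin d) ℝ)).PosDef := by
  rw [smul_one_eq_diagonal]
  exact posDef_diagonal_iff.mpr fun _ => hμ

lemma trace_vmv {d : ℕ} (v : Fin d → ℝ) : (vecMulVec v v).trace = ∑ j, v j ^ 2 := by
  simp [Matrix.trace, Matrix.diag, vecMulVec, sq]

lemma sum_eigenvalues_eq_trace {d : ℕ} {A : Matrix (Fin d) (Fin d) ℝ} (hA : A.IsHermitian) :
    ∑ i, hA.eigenvalues i = A.trace := by
  rw [hA.trace_eq_sum_eigenvalues]
  simp

lemma amgm_det {d : ℕ} (hd : 0 < d) {A : Matrix (Fin d) (Fin d) ℝ} (hA : A.PosDef) :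
    A.det ≤ (A.trace / d) ^ d := by
  have hH := hA.isHermitian
  set ev := hH.eigenvalues with hev
  have hnn : ∀ i, 0 ≤ ev i := hA.posSemidef.eigenvalues_nonneg
  have hdet : A.det = ∏ i, ev i := by
    have := hH.det_eq_prod_eigenvalues
    simpa using this
  have htr : ∑ i, ev i = A.trace := sum_eigenvalues_eq_trace hH
  have hgm := Real.geom_mean_le_arith_mean_weighted Finset.univ (fun _ => 1 / (d:ℝ)) ev
    (fun _ _ => by positivity) (by simp; field_simp) (fun i _ => hnn i)
  have hprod : ∏ i, ev i = (∏ i : Fin d, ev i ^ (1 / (d:ℝ))) ^ d := by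
    rw [← Finset.prod_pow]
    refine Finset.prod_congr rfl fun i _ => ?_
    rw [← Real.rpow_natCast (ev i ^ (1/(d:ℝ))) d, ← Real.rpow_mul (hnn i)]
    rw [one_div, inv_mul_cancel₀ (by exact_mod_cast hd.ne'), Real.rpow_one]
  rw [hdet, hprod]
  have h2 : (∑ i : Fin d, (1/(d:ℝ)) * ev i) = A.trace / d := by
    rw [← Finset.mul_sum, htr]; ring
  rw [h2] at hgm
  exact pow_le_pow_left₀ (Finset.prod_nonneg fun i _ => Real.rpow_nonneg (hnn i) _) hgm d

lemma det_le_det_add_vmv {d : ℕ} {A : Matrix (Fin d) (Fin d) ℝ} (hA : A.PosDef) (v : Fin d → ℝ) :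
    A.det ≤ (A + vecMulVec v v).det := by
  rw [vecMulVec_eq (Fin 1), det_add_replicateCol_mul_replicateRow hA.det_pos.ne'.isUnit]
  have hsym : ∀ i j, A⁻¹ i j = A⁻¹ j i := fun i j => by
    conv_lhs => rw [← hA.inv.isHermitian.eq]
    simp [conjTranspose_apply]
  have h0 : 0 ≤ v ⬝ᵥ (A⁻¹ *ᵥ v) := by
    have := hA.inv.posSemidef.dotProduct_mulVec_nonneg v
    simpa using this
  have hq : (1 + replicateRow (Fin 1) v * A⁻¹ * replicateCol (Fin 1) v).det
      = 1 + v ⬝ᵥ (A⁻¹ *ᵥ v) := by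
    rw [det_unique]
    simp only [Matrix.add_apply, Matrix.one_apply_eq, Matrix.mul_apply, replicateRow, replicateCol, mulVec,
      dotProduct, Finset.sum_mul, Finset.mul_sum, of_apply]
    have h : ∀ (x i : Fin d), v i * A⁻¹ i x * v x = v x * (A⁻¹ x i * v i) := fun x i => by
      rw [hsym i x]; ring
    simp_rw [h]
  have key : (1:ℝ) ≤ (1 + replicateRow (Fin 1) v * A⁻¹ * replicateCol (Fin 1) v).det := by
    rw [hq]; linarith
  nth_rewrite 1 [← mul_one A.det]
  apply mul_le_mul_of_nonneg_left ?_ hA.det_pos.le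
  exact key

/-- Counting large log-determinant jumps along a batch schedule: with
Λ_k = μ·I + Σ_{i<k} φ_i φ_iᵀ, ‖φ_i‖₂ ≤ 1, and an increasing schedule
0 = k₀ < k₁ < ⋯ < k_N = K, the number of batches b with
log(det Λ_{k_{b+1}} / det Λ_{k_b}) > c is at most (d/c)·log(K/(dμ) + 1). -/
theorem count_large_logdet_jumps (d K N : ℕ) (hd : 0 < d) (μ c : ℝ)
    (hμ : 0 < μ) (hc : 0 < c)
    (φ : ℕ → Fin d → ℝ) (hφ : ∀ i, Real.sqrt (∑ j, (φ i j) ^ 2) ≤ 1)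
    (k : ℕ → ℕ) (hk0 : k 0 = 0) (hkN : k N = K)
    (hkmono : ∀ a b, a < b → b ≤ N → k a < k b)
    (Λ : ℕ → Matrix (Fin d) (Fin d) ℝ)
    (hΛ : ∀ n, Λ n = μ • (1 : Matrix (Fin d) (Fin d) ℝ) +
        ∑ i ∈ Finset.range n, vecMulVec (φ i) (φ i)) :
    (((Finset.range N).filter
        (fun b => c < Real.log ((Λ (k (b + 1))).det / (Λ (k b)).det))).card : ℝ)
      ≤ (d / c) * Real.log ((K : ℝ) / (d * μ) + 1) := by
  have hdpos : (0:ℝ) < d := by exact_mod_cast hd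
  have hpos : ∀ n, (Λ n).PosDef := fun n => by
    rw [hΛ n]
    exact (posdef_smul_one hμ).add_posSemidef
      (Finset.sum_induction _ _ (fun a b ha hb => ha.add hb) Matrix.PosSemidef.zero
        (fun i _ => psd_vmv (φ i)))
  have hdetpos : ∀ n, 0 < (Λ n).det := fun n => (hpos n).det_pos
  have hmono : ∀ {n m : ℕ}, n ≤ m → (Λ n).det ≤ (Λ m).det := by
    intro n m h
    induction m, h using Nat.le_induction with
    | base => exact le_refl _
    | succ m hnm ih =>
      refine ih.trans ?_
      have hstep : Λ (m+1) = Λ m + vecMulVec (φ m) (φ m) := by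
        rw [hΛ, hΛ, Finset.sum_range_succ, add_assoc]
      rw [hstep]
      exact det_le_det_add_vmv (hpos m) _
  set g : ℕ → ℝ := fun n => Real.log (Λ n).det with hg
  have hlog : ∀ b, Real.log ((Λ (k (b+1))).det / (Λ (k b)).det) = g (k (b+1)) - g (k b) :=
    fun b => Real.log_div (hdetpos _).ne' (hdetpos _).ne'
  have hfnn : ∀ b ∈ Finset.range N, 0 ≤ g (k (b+1)) - g (k b) := by
    intro b hb
    rw [Finset.mem_range] at hb
    have hkb : k b ≤ k (b+1) := (hkmono b (b+1) (Nat.lt_succ_self b) hb).le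
    have h1 := Real.log_le_log (hdetpos (k b)) (hmono hkb)
    simpa [hg] using sub_nonneg.mpr h1
  set S := (Finset.range N).filter
      (fun b => c < Real.log ((Λ (k (b + 1))).det / (Λ (k b)).det)) with hS
  have h1 : (S.card : ℝ) * c ≤ ∑ b ∈ S, (g (k (b+1)) - g (k b)) := by
    calc (S.card : ℝ) * c = ∑ _b ∈ S, c := by rw [Finset.sum_const, nsmul_eq_mul]
      _ ≤ _ := Finset.sum_le_sum (fun b hb => by
          rw [hS, Finset.mem_filter] at hb
          have h2 := hb.2
          rw [hlog b] at h2
          linarith)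
  have h2 : ∑ b ∈ S, (g (k (b+1)) - g (k b)) ≤ ∑ b ∈ Finset.range N, (g (k (b+1)) - g (k b)) :=
    Finset.sum_le_sum_of_subset_of_nonneg (by rw [hS]; exact Finset.filter_subset _ _)
      (fun b hb _ => hfnn b hb)
  have h3 : ∑ b ∈ Finset.range N, (g (k (b+1)) - g (k b)) = g K - g 0 := by
    rw [Finset.sum_range_sub (fun b => g (k b)), hk0, hkN]
  -- trace bound
  have htr_eq : (Λ K).trace = μ * d + ∑ i ∈ Finset.range K, (vecMulVec (φ i) (φ i)).trace := by
    rw [hΛ K, trace_add, trace_sum, trace_smul, trace_one]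
    simp [smul_eq_mul]
  have hT0 : 0 ≤ ∑ i ∈ Finset.range K, (vecMulVec (φ i) (φ i)).trace :=
    Finset.sum_nonneg fun i _ => by rw [trace_vmv]; positivity
  have hT1 : ∑ i ∈ Finset.range K, (vecMulVec (φ i) (φ i)).trace ≤ K := by
    calc _ ≤ ∑ _i ∈ Finset.range K, (1:ℝ) := Finset.sum_le_sum fun i _ => by
          rw [trace_vmv]
          have h6 : (0:ℝ) ≤ ∑ j, φ i j ^ 2 := Finset.sum_nonneg fun j _ => sq_nonneg _
          nlinarith [hφ i, Real.sq_sqrt h6, Real.sqrt_nonneg (∑ j, φ i j ^ 2)]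
      _ = K := by simp
  have htr : (Λ K).trace ≤ d * μ + K := by
    rw [htr_eq]
    have := mul_comm μ (d:ℝ)
    linarith
  have htrnn : 0 ≤ (Λ K).trace := by
    rw [htr_eq]; positivity
  have hdetK : (Λ K).det ≤ (((d:ℝ) * μ + K) / d) ^ d := by
    refine (amgm_det hd (hpos K)).trans ?_
    exact pow_le_pow_left₀ (div_nonneg htrnn hdpos.le) (by gcongr) d
  have hbpos : (0:ℝ) < ((d:ℝ) * μ + K) / d := by positivity
  have hlogK : g K ≤ (d:ℝ) * Real.log (((d:ℝ) * μ + K) / d) := by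
    calc g K ≤ Real.log ((((d:ℝ) * μ + K) / d) ^ d) := Real.log_le_log (hdetpos K) hdetK
      _ = (d:ℝ) * Real.log (((d:ℝ) * μ + K) / d) := by rw [Real.log_pow]
  have hg0 : g 0 = (d:ℝ) * Real.log μ := by
    have : (Λ 0).det = μ ^ d := by
      rw [hΛ 0]
      simp [Matrix.det_smul]
    simp [hg, this, Real.log_pow]
  have hratio : Real.log (((d:ℝ) * μ + K) / d) - Real.log μ = Real.log ((K:ℝ) / (d * μ) + 1) := by
    rw [← Real.log_div hbpos.ne' hμ.ne']
    congr 1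
    field_simp
    ring
  have hfinal : (S.card : ℝ) * c ≤ (d:ℝ) * Real.log ((K:ℝ) / (d * μ) + 1) := by
    have := h1.trans (h2.trans (le_of_eq h3))
    calc (S.card : ℝ) * c ≤ g K - g 0 := this
      _ ≤ (d:ℝ) * Real.log (((d:ℝ) * μ + K) / d) - (d:ℝ) * Real.log μ := by
          rw [hg0] at *; linarith
      _ = (d:ℝ) * (Real.log (((d:ℝ) * μ + K) / d) - Real.log μ) := by ring
      _ = (d:ℝ) * Real.log ((K:ℝ) / (d * μ) + 1) := by rw [hratio]
  rw [div_mul_eq_mul_div, le_div_iff₀ hc]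
  exact hfinal
end

section
/- For any finite-horizon MDP with horizon H, rewards in [0,1], and linear MDP structure with feature map φ satisfying ‖φ(s,a)‖₂ ≤ 1, ‖θ_h‖₂ ≤ √d, and ‖∫ μ_h(s')v(s')ds'‖₂ ≤ √d·‖v‖_∞: for any policy π and step h, there exists a weight vector w_h^π ∈ ℝ^d with Q_h^π(s,a) = ⟨φ(s,a), w_h^π⟩ for all (s,a), and moreover ‖w_h^π‖₂ ≤ 2H√d. -/
lemma l2_triangle {d : ℕ} (x y : Fin d → ℝ) :
    Real.sqrt (∑ j, (x j + y j) ^ 2) ≤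
      Real.sqrt (∑ j, (x j) ^ 2) + Real.sqrt (∑ j, (y j) ^ 2) := by
  have h := norm_add_le (E := EuclideanSpace ℝ (Fin d)) (WithLp.toLp 2 x) (WithLp.toLp 2 y)
  simpa [EuclideanSpace.norm_eq, Real.norm_eq_abs, sq_abs] using h

/-- In a linear MDP (finite states/actions, horizon H, rewards in [0,1],
r_h(s,a) = ⟨φ(s,a), θ_h⟩, p_h(s'|s,a) = ⟨φ(s,a), μmap_h(s')⟩, with
‖φ(s,a)‖₂ ≤ 1, ‖θ_h‖₂ ≤ √d, and ‖Σ_{s'} v(s')·μmap_h(s')‖₂ ≤ √d·‖v‖_∞),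
the Q-function of any policy π at any step h is linear in the features with a
weight vector of ℓ2-norm at most 2H√d. -/
theorem linear_mdp_Q_linear_weight_bound
    {S A : Type*} [Fintype S] [Fintype A] (d H : ℕ)
    (φ : S → A → Fin d → ℝ) (θ : ℕ → Fin d → ℝ) (μmap : ℕ → S → Fin d → ℝ)
    (r : ℕ → S → A → ℝ) (p : ℕ → S → A → S → ℝ)
    (π : ℕ → S → A) (Q : ℕ → S → A → ℝ)
    -- rewards in [0,1] and linear
    (hr01 : ∀ h s a, 0 ≤ r h s a ∧ r h s a ≤ 1)
    (hrlin : ∀ h s a, r h s a = ∑ j, φ s a j * θ h j)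
    -- transitions are probabilities and linear
    (hpnn : ∀ h s a s', 0 ≤ p h s a s')
    (hpsum : ∀ h s a, ∑ s', p h s a s' = 1)
    (hplin : ∀ h s a s', p h s a s' = ∑ j, φ s a j * μmap h s' j)
    -- feature and parameter bounds
    (hφ : ∀ s a, Real.sqrt (∑ j, (φ s a j) ^ 2) ≤ 1)
    (hθ : ∀ h, Real.sqrt (∑ j, (θ h j) ^ 2) ≤ Real.sqrt d)
    (hμ : ∀ h (v : S → ℝ) (Cv : ℝ), (∀ s', |v s'| ≤ Cv) →
        Real.sqrt (∑ j, (∑ s', μmap h s' j * v s') ^ 2) ≤ Real.sqrt d * Cv)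
    -- Bellman equations defining Q^π (Q_{H} ≡ 0 beyond the horizon)
    (hQtop : ∀ s a, Q H s a = 0)
    (hQ : ∀ h, h < H → ∀ s a,
        Q h s a = r h s a + ∑ s', p h s a s' * Q (h + 1) s' (π (h + 1) s'))
    (h : ℕ) (hh : h < H) :
    ∃ w : Fin d → ℝ,
      (∀ s a, Q h s a = ∑ j, φ s a j * w j) ∧
        Real.sqrt (∑ j, (w j) ^ 2) ≤ 2 * H * Real.sqrt d := by
  -- Bound: 0 ≤ Q h s a ≤ H - h, proved by downward induction
  have hbound : ∀ n h', h' + n = H → ∀ s a, 0 ≤ Q h' s a ∧ Q h' s a ≤ (n : ℝ) := by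
    intro n
    induction n with
    | zero => intro h' hH s a; simp at hH; subst hH; simp [hQtop]
    | succ n ih =>
      intro h' hH s a
      have hlt : h' < H := by omega
      have hih : ∀ s', 0 ≤ Q (h' + 1) s' (π (h' + 1) s') ∧
          Q (h' + 1) s' (π (h' + 1) s') ≤ (n : ℝ) :=
        fun s' => ih (h' + 1) (by omega) s' (π (h' + 1) s')
      rw [hQ h' hlt s a]
      constructor
      · have : (0:ℝ) ≤ ∑ s', p h' s a s' * Q (h' + 1) s' (π (h' + 1) s') :=
          Finset.sum_nonneg fun s' _ => mul_nonneg (hpnn _ _ _ _) (hih s').1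
        linarith [(hr01 h' s a).1]
      · have hle : ∑ s', p h' s a s' * Q (h' + 1) s' (π (h' + 1) s')
            ≤ ∑ s', p h' s a s' * (n : ℝ) := by
          apply Finset.sum_le_sum
          intro s' _
          exact mul_le_mul_of_nonneg_left (hih s').2 (hpnn _ _ _ _)
        rw [← Finset.sum_mul, hpsum h' s a, one_mul] at hle
        have := (hr01 h' s a).2
        push_cast
        linarith
  -- value function at step h+1
  set V : S → ℝ := fun s' => Q (h + 1) s' (π (h + 1) s') with hV
  have hVb : ∀ s', |V s'| ≤ (H : ℝ) := by
    intro s'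
    have := hbound (H - (h + 1)) (h + 1) (by omega) s' (π (h + 1) s')
    rw [abs_le]
    constructor
    · linarith [this.1]
    · calc V s' ≤ ((H - (h+1) : ℕ) : ℝ) := this.2
        _ ≤ (H : ℝ) := by exact_mod_cast Nat.sub_le _ _
  refine ⟨fun j => θ h j + ∑ s', μmap h s' j * V s', ?_, ?_⟩
  · intro s a
    rw [hQ h hh s a, hrlin h s a]
    simp only [mul_add, Finset.sum_add_distrib]
    congr 1
    rw [show (∑ s' : S, p h s a s' * Q (h+1) s' (π (h+1) s'))
        = ∑ s', ∑ j, φ s a j * (μmap h s' j * V s') from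
      Finset.sum_congr rfl fun s' _ => by
        rw [hplin h s a s', Finset.sum_mul]
        exact Finset.sum_congr rfl fun j _ => by simp [hV]; ring,
      Finset.sum_comm]
    simp [Finset.mul_sum]
  · have htri := l2_triangle (θ h) (fun j => ∑ s', μmap h s' j * V s')
    have h1 := hθ h
    have h2 := hμ h V (H : ℝ) hVb
    have hH1 : (1 : ℝ) ≤ (H : ℝ) := by exact_mod_cast Nat.one_le_iff_ne_zero.mpr (by omega)
    have hsd : 0 ≤ Real.sqrt d := Real.sqrt_nonneg _
    calc Real.sqrt (∑ j, (θ h j + ∑ s', μmap h s' j * V s') ^ 2)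
        ≤ Real.sqrt (∑ j, (θ h j) ^ 2) +
          Real.sqrt (∑ j, (∑ s', μmap h s' j * V s') ^ 2) := htri
      _ ≤ Real.sqrt d + Real.sqrt d * H := by linarith
      _ ≤ 2 * H * Real.sqrt d := by nlinarith
end
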